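/- Let A ∈ ℂ^{m×n} and V a complex Hilbert space; extend A to V^n → V^m by (Ac)_i = Σ_j A_{ij} c_j. Suppose A satisfies a two-sided bound aα‖c‖²_{ℓ²(V)} ≤ ‖Ac‖²_{ℓ²(V)} ≤ bβ‖c‖²_{ℓ²(V)} for all t-sparse c ∈ V^n, where t = 2⌈4s·bβ/(aα)⌉ ≤ n and s ≥ 1. Then A satisfies the robust null space property of order s over V^n with constants ρ = 1/2 and τ = 1/√(aα): for every c ∈ V^n and every S ⊆ [n] with |S| ≤ s, ‖c_S‖_{ℓ²(V)} ≤ (1/(2√s))‖c_{S^c}‖_{ℓ¹(V)} + (1/√(aα))‖Ac‖_{ℓ²(V)}. -/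

import Mathlib

open Finset

namespace RNSPAux

/-- The `k`-th block of indices of size `r` inside `Fin M`. -/
def idx (M r k : ℕ) : Finset (Fin M) :=
  Finset.attachFin (Finset.Ico (k * r) (min (k * r + r) M)) (fun u hu => by
    simp only [Finset.mem_Ico, lt_min_iff] at hu; exact hu.2.2)

lemma mem_idx {M r k : ℕ} {j : Fin M} :
    j ∈ idx M r k ↔ k * r ≤ (j : ℕ) ∧ (j : ℕ) < k * r + r := by
  have hj := j.isLt
  simp only [idx, Finset.mem_attachFin, Finset.mem_Ico, lt_min_iff]
  omega

lemma card_idx (M r k : ℕ) : (idx M r k).card = min (k * r + r) M - k * r := by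
  simp [idx, Finset.card_attachFin]

lemma card_idx_le (M r k : ℕ) : (idx M r k).card ≤ r := by
  rw [card_idx]; omega

lemma card_idx_full {M r k : ℕ} (h : k * r + r ≤ M) : (idx M r k).card = r := by
  rw [card_idx]; omega

lemma block_eq_of_mem {M r k : ℕ} (hr : 1 ≤ r) {j : Fin M} (h : j ∈ idx M r k) :
    k = (j : ℕ) / r := by
  rw [mem_idx] at h
  exact (Nat.div_eq_of_lt_le h.1 (by rw [add_mul, one_mul]; exact h.2)).symm

lemma mem_idx_div {M r : ℕ} (hr : 1 ≤ r) (j : Fin M) : j ∈ idx M r ((j : ℕ) / r) := by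
  rw [mem_idx]
  have h1 : r * ((j : ℕ) / r) + (j : ℕ) % r = (j : ℕ) := Nat.div_add_mod _ _
  have h2 : (j : ℕ) % r < r := Nat.mod_lt _ (by omega)
  constructor
  · rw [mul_comm]; omega
  · rw [mul_comm]; omega

lemma div_lt_M {M r : ℕ} (hr : 1 ≤ r) (j : Fin M) : (j : ℕ) / r < M :=
  lt_of_le_of_lt (Nat.div_le_self _ _) j.isLt

lemma sum_idx_eq {M r : ℕ} (hr : 1 ≤ r) (F : Fin M → ℝ) :
    ∑ k ∈ Finset.range M, ∑ j ∈ idx M r k, F j = ∑ j, F j := by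
  have hdisj : ∀ k₁ ∈ (Finset.range M : Finset ℕ), ∀ k₂ ∈ (Finset.range M : Finset ℕ),
      k₁ ≠ k₂ → Disjoint (idx M r k₁) (idx M r k₂) := by
    intro k₁ _ k₂ _ hne
    rw [Finset.disjoint_left]
    intro j h1 h2
    exact hne ((block_eq_of_mem hr h1).trans (block_eq_of_mem hr h2).symm)
  rw [← Finset.sum_biUnion hdisj]
  congr 1
  apply Finset.eq_univ_of_forall
  intro j
  rw [Finset.mem_biUnion]
  exact ⟨(j : ℕ) / r, Finset.mem_range.2 (div_lt_M hr j), mem_idx_div hr j⟩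

/-- The key tail estimate: the sum of block-wise ℓ² norms of the tail blocks of an
antitone nonnegative sequence is bounded by `(1/√r)` times the ℓ¹ norm. -/
lemma tail_bound {M r : ℕ} (hr : 1 ≤ r) (y : Fin M → ℝ)
    (hy : ∀ j, 0 ≤ y j) (hanti : Antitone y) :
    ∑ k ∈ Finset.Ico 1 M, Real.sqrt (∑ j ∈ idx M r k, y j ^ 2)
      ≤ (1 / Real.sqrt (r : ℝ)) * ∑ j, y j := by
  have hrpos : (0 : ℝ) < Real.sqrt (r : ℝ) := Real.sqrt_pos.2 (by exact_mod_cast hr)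
  have hmsum_nonneg : ∀ k : ℕ, 0 ≤ ∑ j ∈ idx M r k, y j :=
    fun k => Finset.sum_nonneg fun j _ => hy j
  have hstep : ∀ k : ℕ, 1 ≤ k →
      Real.sqrt (∑ j ∈ idx M r k, y j ^ 2)
        ≤ (1 / Real.sqrt (r : ℝ)) * ∑ j ∈ idx M r (k - 1), y j := by
    intro k hk
    by_cases hne : (idx M r k).Nonempty
    · obtain ⟨j0, hj0⟩ := hne
      have hj0' := (mem_idx.1 hj0).1
      have hfull : (k - 1) * r + r ≤ M := by
        have : (k - 1) * r + r = k * r := by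
          cases k with
          | zero => omega
          | succ k' => simp [Nat.succ_sub_one, Nat.succ_mul]
        rw [this]
        exact le_trans hj0' (le_of_lt j0.isLt)
      have hcard : (idx M r (k - 1)).card = r := card_idx_full hfull
      set m1 : ℝ := ∑ j ∈ idx M r (k - 1), y j with hm1
      have hm1nn : 0 ≤ m1 := hmsum_nonneg _
      -- every entry in block k is ≤ m1 / r
      have hkey : ∀ j ∈ idx M r k, y j ≤ m1 / r := by
        intro j hj
        have hle : ∀ j' ∈ idx M r (k - 1), y j ≤ y j' := by
          intro j' hj'
          apply hanti
          have h1 := (mem_idx.1 hj').2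
          have h2 := (mem_idx.1 hj).1
          have h3 : (k - 1) * r + r ≤ k * r := by
            cases k with
            | zero => omega
            | succ k' => simp [Nat.succ_sub_one, Nat.succ_mul]
          rw [Fin.le_def]
          omega
        have : (r : ℝ) * y j ≤ m1 := by
          calc (r : ℝ) * y j = ∑ _j' ∈ idx M r (k - 1), y j := by
                rw [Finset.sum_const, hcard, nsmul_eq_mul]
            _ ≤ m1 := Finset.sum_le_sum hle
        rw [le_div_iff₀ (by exact_mod_cast hr)]
        linarith
      have h2 : ∑ j ∈ idx M r k, y j ^ 2 ≤ (m1 / r) * ∑ j ∈ idx M r k, y j := by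
        rw [Finset.mul_sum]
        apply Finset.sum_le_sum
        intro j hj
        have := hkey j hj
        have := hy j
        nlinarith
      have h3 : ∑ j ∈ idx M r k, y j ≤ m1 := by
        calc ∑ j ∈ idx M r k, y j ≤ ∑ _j ∈ idx M r k, m1 / r :=
              Finset.sum_le_sum hkey
          _ = (idx M r k).card * (m1 / r) := by rw [Finset.sum_const, nsmul_eq_mul]
          _ ≤ (r : ℝ) * (m1 / r) := by
              apply mul_le_mul_of_nonneg_right _ (by positivity)
              exact_mod_cast card_idx_le M r k
          _ = m1 := by field_simp
      have h4 : ∑ j ∈ idx M r k, y j ^ 2 ≤ m1 ^ 2 / r := by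
        have hmm : (m1 / r) * ∑ j ∈ idx M r k, y j ≤ (m1 / r) * m1 :=
          mul_le_mul_of_nonneg_left h3 (by positivity)
        calc ∑ j ∈ idx M r k, y j ^ 2 ≤ (m1 / r) * m1 := le_trans h2 hmm
          _ = m1 ^ 2 / r := by ring
      calc Real.sqrt (∑ j ∈ idx M r k, y j ^ 2) ≤ Real.sqrt (m1 ^ 2 / r) :=
            Real.sqrt_le_sqrt h4
        _ = (1 / Real.sqrt (r : ℝ)) * m1 := by
            rw [Real.sqrt_div (by positivity : (0:ℝ) ≤ m1 ^ 2), Real.sqrt_sq hm1nn]; ring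
    · rw [Finset.not_nonempty_iff_eq_empty] at hne
      rw [hne]
      simp only [Finset.sum_empty, Real.sqrt_zero]
      exact mul_nonneg (by positivity) (hmsum_nonneg _)
  calc ∑ k ∈ Finset.Ico 1 M, Real.sqrt (∑ j ∈ idx M r k, y j ^ 2)
      ≤ ∑ k ∈ Finset.Ico 1 M, (1 / Real.sqrt (r : ℝ)) * ∑ j ∈ idx M r (k - 1), y j := by
        apply Finset.sum_le_sum
        intro k hk
        exact hstep k (Finset.mem_Ico.1 hk).1
    _ = (1 / Real.sqrt (r : ℝ)) * ∑ k ∈ Finset.Ico 1 M, ∑ j ∈ idx M r (k - 1), y j := by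
        rw [Finset.mul_sum]
    _ ≤ (1 / Real.sqrt (r : ℝ)) * ∑ j, y j := by
        apply mul_le_mul_of_nonneg_left _ (by positivity)
        calc ∑ k ∈ Finset.Ico 1 M, ∑ j ∈ idx M r (k - 1), y j
            = ∑ k ∈ Finset.range (M - 1), ∑ j ∈ idx M r k, y j := by
              rw [Finset.sum_Ico_eq_sum_range]
              apply Finset.sum_congr rfl
              intro k _
              simp only [Nat.add_sub_cancel_left]
          _ ≤ ∑ k ∈ Finset.range M, ∑ j ∈ idx M r k, y j := by
              apply Finset.sum_le_sum_of_subset_of_nonneg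
              · exact Finset.range_subset_range.2 (by omega)
              · intro k _ _; exact hmsum_nonneg k
          _ = ∑ j, y j := sum_idx_eq hr y

/-- A sorted enumeration of `Sᶜ` in decreasing order of `‖c i‖`. -/
lemma exists_sorted_embed {n : ℕ} {V : Type*} [NormedAddCommGroup V]
    (S : Finset (Fin n)) (c : Fin n → V) :
    ∃ g : Fin (Sᶜ.card) → Fin n, Function.Injective g ∧ (∀ j, g j ∈ Sᶜ) ∧
      Finset.image g Finset.univ = Sᶜ ∧ Antitone (fun j => ‖c (g j)‖) := by
  set M := Sᶜ.card with hM
  let e : Fin M ≃o {x // x ∈ Sᶜ} := Finset.orderIsoOfFin Sᶜ rfl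
  let σ : Equiv.Perm (Fin M) := Tuple.sort (fun j => -‖c ((e j : Fin n))‖)
  refine ⟨fun j => (e (σ j) : Fin n), ?_, ?_, ?_, ?_⟩
  · intro j1 j2 h
    exact σ.injective (e.injective (Subtype.ext h))
  · intro j; exact (e (σ j)).2
  · apply Finset.eq_of_subset_of_card_le
    · intro i hi
      rw [Finset.mem_image] at hi
      obtain ⟨j, _, rfl⟩ := hi
      exact (e (σ j)).2
    · rw [Finset.card_image_of_injective _ (fun j1 j2 h =>
        σ.injective (e.injective (Subtype.ext h)))]
      simp [hM]
  · intro j1 j2 hle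
    have := Tuple.monotone_sort (fun j => -‖c ((e j : Fin n))‖) hle
    simp only [Function.comp_apply] at this
    exact le_of_neg_le_neg this

end RNSPAux

/-- A matrix satisfying a two-sided `ℓ²` bound on `t`-sparse Hilbert-valued vectors, with
`t = 2⌈4s·bβ/(aα)⌉ ≤ n`, satisfies the robust null space property of order `s` over `V^n`
with constants `ρ = 1/2` and `τ = 1/√(aα)`. -/
theorem rnsp_of_two_sided_sparse_bound
    (m n s : ℕ) (hs : 1 ≤ s)
    (V : Type*) [NormedAddCommGroup V] [InnerProductSpace ℂ V] [CompleteSpace V]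
    (A : Matrix (Fin m) (Fin n) ℂ)
    (a b α β : ℝ) (ha : 0 < a) (hα : 0 < α) (hb : a ≤ b) (hβ : α ≤ β)
    (t : ℕ) (ht : t = 2 * ⌈4 * s * (b * β) / (a * α)⌉₊) (htn : t ≤ n)
    (hbound : ∀ c : Fin n → V, Set.ncard {i | c i ≠ 0} ≤ t →
      a * α * ∑ i, ‖c i‖ ^ 2 ≤ ∑ i, ‖∑ j, A i j • c j‖ ^ 2 ∧
      ∑ i, ‖∑ j, A i j • c j‖ ^ 2 ≤ b * β * ∑ i, ‖c i‖ ^ 2) :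
    ∀ c : Fin n → V, ∀ S : Finset (Fin n), S.card ≤ s →
      Real.sqrt (∑ i ∈ S, ‖c i‖ ^ 2) ≤
        (1 / (2 * Real.sqrt s)) * ∑ i ∈ Sᶜ, ‖c i‖ +
          (1 / Real.sqrt (a * α)) * Real.sqrt (∑ i, ‖∑ j, A i j • c j‖ ^ 2) := by
  classical
  intro c S hS
  have haα : (0:ℝ) < a * α := mul_pos ha hα
  have hbpos : (0:ℝ) < b := lt_of_lt_of_le ha hb
  have hβpos : (0:ℝ) < β := lt_of_lt_of_le hα hβ
  have hbβ : (0:ℝ) < b * β := mul_pos hbpos hβpos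
  have haαbβ : a * α ≤ b * β := mul_le_mul hb hβ hα.le hbpos.le
  set r : ℕ := ⌈4 * s * (b * β) / (a * α)⌉₊ with hrdef
  have hrr : (4 * s * (b * β) / (a * α) : ℝ) ≤ (r : ℝ) := Nat.le_ceil _
  have hsle : (4 * (s:ℝ) : ℝ) ≤ 4 * s * (b * β) / (a * α) := by
    rw [le_div_iff₀ haα]
    have h4s : (0:ℝ) ≤ 4 * s := by positivity
    nlinarith
  have hr4s : 4 * s ≤ r := by
    have hcast : ((4 * s : ℕ) : ℝ) ≤ (r : ℝ) := by push_cast; linarith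
    exact_mod_cast hcast
  have hr1 : 1 ≤ r := by omega
  have htr : t = 2 * r := ht
  -- sorted enumeration of Sᶜ
  obtain ⟨g, hginj, hgmem, hgimg, hganti⟩ := RNSPAux.exists_sorted_embed S c
  set y : Fin Sᶜ.card → ℝ := fun j => ‖c (g j)‖ with hy
  have hy0 : ∀ j, 0 ≤ y j := fun j => norm_nonneg _
  set T : ℕ → Finset (Fin n) := fun k => (RNSPAux.idx Sᶜ.card r k).image g with hT
  set B : Finset (Fin n) := S ∪ T 0 with hB
  set f : Finset (Fin n) → Fin n → V := fun U i => if i ∈ U then c i else 0 with hf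
  -- basic facts about the truncations f U
  have hsum_sq : ∀ U : Finset (Fin n), ∑ i, ‖f U i‖ ^ 2 = ∑ i ∈ U, ‖c i‖ ^ 2 := by
    intro U
    have : ∀ i : Fin n, ‖f U i‖ ^ 2 = if i ∈ U then ‖c i‖ ^ 2 else 0 := by
      intro i; by_cases h : i ∈ U <;> simp [hf, h]
    rw [Finset.sum_congr rfl (fun i _ => this i), Finset.sum_ite_mem, Finset.univ_inter]
  have hsupp : ∀ U : Finset (Fin n), Set.ncard {i | f U i ≠ 0} ≤ U.card := by
    intro U
    have hsub : {i | f U i ≠ 0} ⊆ (U : Set (Fin n)) := by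
      intro i hi
      by_contra h
      have h' : i ∉ U := fun hh => h (Finset.mem_coe.2 hh)
      exact hi (by simp only [hf]; rw [if_neg h'])
    calc Set.ncard {i | f U i ≠ 0} ≤ Set.ncard (U : Set (Fin n)) :=
          Set.ncard_le_ncard hsub (U.finite_toSet)
      _ = U.card := Set.ncard_coe_finset U
  have hfval : ∀ (U : Finset (Fin n)) i, i ∈ U → f U i = c i := by
    intro U i h; simp only [hf]; rw [if_pos h]
  have hfval0 : ∀ (U : Finset (Fin n)) i, i ∉ U → f U i = 0 := by
    intro U i h; simp only [hf]; rw [if_neg h]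
  have hcardT : ∀ k, (T k).card ≤ r :=
    fun k => le_trans Finset.card_image_le (RNSPAux.card_idx_le Sᶜ.card r k)
  have hcardB : B.card ≤ t := by
    calc B.card ≤ S.card + (T 0).card := Finset.card_union_le _ _
      _ ≤ s + r := add_le_add hS (hcardT 0)
      _ ≤ t := by omega
  -- the linear map and its ℓ² norm
  set LA : (Fin n → V) →ₗ[ℂ] (Fin m → V) :=
    { toFun := fun v i => ∑ j, A i j • v j
      map_add' := by
        intro v w; funext i
        simp [smul_add, Finset.sum_add_distrib]
      map_smul' := by
        intro z v; funext i
        simp only [Pi.smul_apply, RingHom.id_apply, Finset.smul_sum]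
        exact Finset.sum_congr rfl fun j _ => smul_comm _ _ _ } with hLA
  set Φ : (Fin n → V) →ₗ[ℂ] PiLp 2 (fun _ : Fin m => V) :=
    (WithLp.linearEquiv 2 ℂ (Fin m → V)).symm.toLinearMap.comp LA with hΦ
  have hΦnorm : ∀ v : Fin n → V,
      ‖Φ v‖ = Real.sqrt (∑ i, ‖∑ j, A i j • v j‖ ^ 2) := by
    intro v
    rw [PiLp.norm_eq_of_L2]
    rfl
  -- decomposition of c
  have hpart : f B + ∑ k ∈ Finset.Ico 1 Sᶜ.card, f (T k) = c := by
    funext i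
    simp only [Pi.add_apply, Finset.sum_apply]
    have hginj' : ∀ j1 j2, g j1 = g j2 → j1 = j2 := fun _ _ h => hginj h
    by_cases hiS : i ∈ S
    · have h1 : f B i = c i := hfval _ _ (Finset.mem_union_left _ hiS)
      have h2 : ∀ k ∈ Finset.Ico 1 Sᶜ.card, f (T k) i = 0 := by
        intro k _
        have hnot : i ∉ T k := by
          intro hmem
          obtain ⟨j, _, rfl⟩ := Finset.mem_image.1 hmem
          exact (Finset.mem_compl.1 (hgmem j)) hiS
        exact hfval0 _ _ hnot
      rw [h1, Finset.sum_eq_zero h2, add_zero]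
    · have hic : i ∈ Sᶜ := Finset.mem_compl.2 hiS
      have himg : i ∈ Finset.image g Finset.univ := by rw [hgimg]; exact hic
      obtain ⟨j, -, rfl⟩ := Finset.mem_image.1 himg
      have hjmem : j ∈ RNSPAux.idx Sᶜ.card r ((j : ℕ) / r) := RNSPAux.mem_idx_div hr1 j
      have hmemT : ∀ k : ℕ, g j ∈ T k ↔ k = (j : ℕ) / r := by
        intro k
        constructor
        · intro hmem
          obtain ⟨j', hj', hjj⟩ := Finset.mem_image.1 hmem
          have : j' = j := hginj' _ _ hjj
          subst this
          exact RNSPAux.block_eq_of_mem hr1 hj'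
        · intro hk
          subst hk
          exact Finset.mem_image_of_mem g hjmem
      by_cases hk0 : (j : ℕ) / r = 0
      · have hmemB : g j ∈ B := by
          rw [hB, Finset.mem_union]
          right
          rw [hmemT 0]
          exact hk0.symm
        have h1 : f B (g j) = c (g j) := hfval _ _ hmemB
        have h2 : ∀ k ∈ Finset.Ico 1 Sᶜ.card, f (T k) (g j) = 0 := by
          intro k hk
          have hknot : g j ∉ T k := by
            rw [hmemT k]
            have h1 := (Finset.mem_Ico.1 hk).1
            exact fun h => absurd (h.trans hk0) (by omega)
          exact hfval0 _ _ hknot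
        rw [h1, Finset.sum_eq_zero h2, add_zero]
      · have hnotB : g j ∉ B := by
          rw [hB, Finset.mem_union]
          push_neg
          constructor
          · exact hiS
          · rw [hmemT 0]; exact fun h => hk0 h.symm
        have h1 : f B (g j) = 0 := hfval0 _ _ hnotB
        have h2 : ∑ k ∈ Finset.Ico 1 Sᶜ.card, f (T k) (g j) = c (g j) := by
          rw [Finset.sum_eq_single_of_mem ((j : ℕ) / r) ?_ ?_]
          · exact hfval _ _ ((hmemT _).2 rfl)
          · rw [Finset.mem_Ico]
            exact ⟨Nat.pos_of_ne_zero hk0, RNSPAux.div_lt_M hr1 j⟩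
          · intro k _ hne
            exact hfval0 _ _ (by rw [hmemT k]; exact hne)
        rw [h1, h2, zero_add]
  -- norm inequalities
  have hΦparts : Φ (f B) = Φ c - ∑ k ∈ Finset.Ico 1 Sᶜ.card, Φ (f (T k)) := by
    conv_rhs => rw [← hpart]
    rw [map_add, map_sum]
    abel
  have hnorm1 : ‖Φ (f B)‖ ≤ ‖Φ c‖ + ∑ k ∈ Finset.Ico 1 Sᶜ.card, ‖Φ (f (T k))‖ := by
    rw [hΦparts]
    refine le_trans (norm_sub_le _ _) ?_
    exact add_le_add le_rfl (norm_sum_le _ _)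
  have hlowB : Real.sqrt (a * α) * Real.sqrt (∑ i ∈ B, ‖c i‖ ^ 2) ≤ ‖Φ (f B)‖ := by
    rw [hΦnorm, ← hsum_sq, ← Real.sqrt_mul haα.le]
    exact Real.sqrt_le_sqrt (hbound (f B) (le_trans (hsupp B) hcardB)).1
  have hblocksum : ∀ k, ∑ i ∈ T k, ‖c i‖ ^ 2 = ∑ j ∈ RNSPAux.idx Sᶜ.card r k, y j ^ 2 := by
    intro k
    simp only [hT]
    exact Finset.sum_image (fun x _ x' _ h => hginj h)
  have hupT : ∀ k ∈ Finset.Ico 1 Sᶜ.card, ‖Φ (f (T k))‖ ≤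
      Real.sqrt (b * β) * Real.sqrt (∑ j ∈ RNSPAux.idx Sᶜ.card r k, y j ^ 2) := by
    intro k _
    rw [hΦnorm]
    calc Real.sqrt (∑ i, ‖∑ j, A i j • f (T k) j‖ ^ 2)
        ≤ Real.sqrt (b * β * ∑ i, ‖f (T k) i‖ ^ 2) :=
          Real.sqrt_le_sqrt (hbound (f (T k))
            (le_trans (hsupp _) (le_trans (hcardT k) (by omega)))).2
      _ = Real.sqrt (b * β) * Real.sqrt (∑ j ∈ RNSPAux.idx Sᶜ.card r k, y j ^ 2) := by
          rw [hsum_sq, hblocksum, Real.sqrt_mul hbβ.le]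
  have htail := RNSPAux.tail_bound hr1 y hy0 hganti
  have hL1 : ∑ i ∈ Sᶜ, ‖c i‖ = ∑ j, y j := by
    conv_lhs => rw [← hgimg]
    exact Finset.sum_image (fun x _ x' _ h => hginj h)
  have hSB : Real.sqrt (∑ i ∈ S, ‖c i‖ ^ 2) ≤ Real.sqrt (∑ i ∈ B, ‖c i‖ ^ 2) :=
    Real.sqrt_le_sqrt (Finset.sum_le_sum_of_subset_of_nonneg Finset.subset_union_left
      (fun i _ _ => by positivity))
  have hysum : 0 ≤ ∑ j, y j := Finset.sum_nonneg fun j _ => hy0 j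
  have hP : (0:ℝ) < Real.sqrt (a * α) := Real.sqrt_pos.2 haα
  have hQ : (0:ℝ) ≤ Real.sqrt (b * β) := Real.sqrt_nonneg _
  have hrpos : (0:ℝ) < Real.sqrt (r : ℝ) := Real.sqrt_pos.2 (by exact_mod_cast hr1)
  have hspos : (0:ℝ) < Real.sqrt (s : ℝ) := Real.sqrt_pos.2 (by exact_mod_cast hs)
  have main : Real.sqrt (a*α) * Real.sqrt (∑ i ∈ S, ‖c i‖ ^ 2)
      ≤ ‖Φ c‖ + Real.sqrt (b * β) * ((1 / Real.sqrt (r:ℝ)) * ∑ j, y j) := by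
    calc Real.sqrt (a*α) * Real.sqrt (∑ i ∈ S, ‖c i‖^2)
        ≤ Real.sqrt (a*α) * Real.sqrt (∑ i ∈ B, ‖c i‖^2) :=
          mul_le_mul_of_nonneg_left hSB hP.le
      _ ≤ ‖Φ (f B)‖ := hlowB
      _ ≤ ‖Φ c‖ + ∑ k ∈ Finset.Ico 1 Sᶜ.card, ‖Φ (f (T k))‖ := hnorm1
      _ ≤ ‖Φ c‖ + ∑ k ∈ Finset.Ico 1 Sᶜ.card,
            Real.sqrt (b*β) * Real.sqrt (∑ j ∈ RNSPAux.idx Sᶜ.card r k, y j ^ 2) :=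
          add_le_add le_rfl (Finset.sum_le_sum hupT)
      _ = ‖Φ c‖ + Real.sqrt (b*β) * ∑ k ∈ Finset.Ico 1 Sᶜ.card,
            Real.sqrt (∑ j ∈ RNSPAux.idx Sᶜ.card r k, y j ^ 2) := by
          rw [Finset.mul_sum]
      _ ≤ ‖Φ c‖ + Real.sqrt (b*β) * ((1 / Real.sqrt (r:ℝ)) * ∑ j, y j) :=
          add_le_add le_rfl (mul_le_mul_of_nonneg_left htail hQ)
  have hconst : Real.sqrt (b*β) / (Real.sqrt (a*α) * Real.sqrt (r:ℝ)) ≤ 1 / (2 * Real.sqrt s) := by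
    rw [div_le_div_iff₀ (by positivity) (by positivity)]
    have h4 : 4 * (s:ℝ) * (b*β) ≤ (a*α) * r := by
      rw [div_le_iff₀ haα] at hrr
      linarith
    have e1 : Real.sqrt (b*β) * (2 * Real.sqrt s) = Real.sqrt (4 * s * (b*β)) := by
      rw [show (4:ℝ) * s * (b*β) = (b*β) * ((2:ℝ)^2 * s) by ring, Real.sqrt_mul hbβ.le,
        Real.sqrt_mul (by positivity : (0:ℝ) ≤ (2:ℝ)^2), Real.sqrt_sq (by norm_num : (0:ℝ) ≤ 2)]
    have e2 : (1:ℝ) * (Real.sqrt (a*α) * Real.sqrt (r:ℝ)) = Real.sqrt ((a*α) * r) := by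
      rw [one_mul, ← Real.sqrt_mul haα.le]
    rw [e1, e2]
    exact Real.sqrt_le_sqrt h4
  rw [hL1, ← hΦnorm c]
  have hCnn : (0:ℝ) ≤ ‖Φ c‖ := norm_nonneg _
  have step : Real.sqrt (∑ i ∈ S, ‖c i‖ ^ 2) ≤ ‖Φ c‖ / Real.sqrt (a*α) +
      (Real.sqrt (b*β) / (Real.sqrt (a*α) * Real.sqrt (r:ℝ))) * ∑ j, y j := by
    rw [← mul_le_mul_iff_right₀ hP]
    have heq : Real.sqrt (a*α) * (‖Φ c‖ / Real.sqrt (a*α) +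
        Real.sqrt (b*β) / (Real.sqrt (a*α) * Real.sqrt (r:ℝ)) * ∑ j, y j)
        = ‖Φ c‖ + Real.sqrt (b*β) * ((1 / Real.sqrt (r:ℝ)) * ∑ j, y j) := by
      field_simp
    rw [heq]
    exact main
  have step2 : (Real.sqrt (b*β) / (Real.sqrt (a*α) * Real.sqrt (r:ℝ))) * ∑ j, y j
      ≤ (1/(2*Real.sqrt s)) * ∑ j, y j :=
    mul_le_mul_of_nonneg_right hconst hysum
  have hCdiv : ‖Φ c‖ / Real.sqrt (a*α) = (1 / Real.sqrt (a*α)) * ‖Φ c‖ := by ring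
  linarith
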